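/- Let U be a real or complex Banach space, let (x_n) be a complemented unconditional basic sequence in U with projecting functionals (x*_n), and let (y_n) be a complemented unconditional basic sequence in U with projecting functionals (y*_n). If (x_n) and (y_n) are congruent (i.e., some bicontinuous linear automorphism S of U satisfies S(x_n) = y_n for all n), then there exists a bicontinuous linear automorphism T of U such that T(x_n) = y_n and y*_n ∘ T = x*_n for all n. -/

import Mathlib

open Filter Topology

/-- A sequence `x` in a Banach space, together with functionals `xs` in the dual, is a
*complemented unconditional basic sequence with projecting functionals* `xs` if they are
biorthogonal, the partial-sum projections `f ↦ ∑_{n ∈ A} xs n f • x n` are uniformly bounded,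
and for every `f` the series `∑ xs n f • x n` converges in norm, defining a bounded linear
projection of the space onto the closed linear span of `x`. -/
def IsComplUncondBasicSeq (𝕜 : Type*) [RCLike 𝕜] {U : Type*} [NormedAddCommGroup U]
    [NormedSpace 𝕜 U] (x : ℕ → U) (xs : ℕ → U →L[𝕜] 𝕜) : Prop :=
  (∀ k n, xs k (x n) = if k = n then 1 else 0) ∧
  (∃ C : ℝ, ∀ (f : U) (A : Finset ℕ), ‖∑ n ∈ A, xs n f • x n‖ ≤ C * ‖f‖) ∧
  (∃ P : U →L[𝕜] U,
    (∀ f : U, Tendsto (fun m => ∑ n ∈ Finset.range m, xs n f • x n) atTop (𝓝 (P f))) ∧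
    (∀ f, P (P f) = P f) ∧
    LinearMap.range (P : U →ₗ[𝕜] U) = (Submodule.span 𝕜 (Set.range x)).topologicalClosure)

/-- Let `x` and `y` be complemented unconditional basic sequences in a Banach
space `U` with projecting functionals `xs` and `ys` respectively. If `x` and `y` are congruent
(some bicontinuous linear automorphism `S` of `U` satisfies `S (x n) = y n` for all `n`), then
there is a bicontinuous linear automorphism `T` of `U` with `T (x n) = y n` and
`ys n ∘ T = xs n` for all `n`. -/
theorem statement2 {𝕜 : Type*} [RCLike 𝕜] {U : Type*} [NormedAddCommGroup U]
    [NormedSpace 𝕜 U] [CompleteSpace U]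
    (x y : ℕ → U) (xs ys : ℕ → U →L[𝕜] 𝕜)
    (hx : IsComplUncondBasicSeq 𝕜 x xs) (hy : IsComplUncondBasicSeq 𝕜 y ys)
    (hcong : ∃ S : U ≃L[𝕜] U, ∀ n, S (x n) = y n) :
    ∃ T : U ≃L[𝕜] U, (∀ n, T (x n) = y n) ∧ (∀ n (u : U), ys n (T u) = xs n u) := by
  obtain ⟨hxo, -, P, hPt, hPi, hPr⟩ := hx
  obtain ⟨hyo, -, Q, hQt, hQi, hQr⟩ := hy
  obtain ⟨S, hS⟩ := hcong
  have hS' : ∀ n, S.symm (y n) = x n := fun n => by rw [← hS n, S.symm_apply_apply]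
  -- identity on ranges
  have hPid : ∀ u, u ∈ (Submodule.span 𝕜 (Set.range x)).topologicalClosure → P u = u := by
    intro u hu; rw [← hPr] at hu; obtain ⟨w, rfl⟩ := hu; exact hPi w
  have hQid : ∀ u, u ∈ (Submodule.span 𝕜 (Set.range y)).topologicalClosure → Q u = u := by
    intro u hu; rw [← hQr] at hu; obtain ⟨w, rfl⟩ := hu; exact hQi w
  have hPmem : ∀ u, P u ∈ (Submodule.span 𝕜 (Set.range x)).topologicalClosure := by
    intro u; rw [← hPr]; exact ⟨u, rfl⟩
  have hQmem : ∀ u, Q u ∈ (Submodule.span 𝕜 (Set.range y)).topologicalClosure := by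
    intro u; rw [← hQr]; exact ⟨u, rfl⟩
  have hPx : ∀ n, P (x n) = x n := fun n =>
    hPid _ (Submodule.le_topologicalClosure _ (Submodule.subset_span ⟨n, rfl⟩))
  have hQy : ∀ n, Q (y n) = y n := fun n =>
    hQid _ (Submodule.le_topologicalClosure _ (Submodule.subset_span ⟨n, rfl⟩))
  -- S maps closure of span x into closure of span y, and conversely for S.symm
  have key : ∀ (f : U →L[𝕜] U) (a b : ℕ → U), (∀ n, f (a n) = b n) → ∀ u,
      u ∈ (Submodule.span 𝕜 (Set.range a)).topologicalClosure →
      f u ∈ (Submodule.span 𝕜 (Set.range b)).topologicalClosure := by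
    intro f a b hf u hu
    have hmap : Set.MapsTo f (Submodule.span 𝕜 (Set.range a) : Set U)
        (Submodule.span 𝕜 (Set.range b) : Set U) := by
      intro v hv
      have h1 : Submodule.map (f : U →ₗ[𝕜] U) (Submodule.span 𝕜 (Set.range a))
          ≤ Submodule.span 𝕜 (Set.range b) := by
        rw [Submodule.map_span]
        apply Submodule.span_mono
        rintro _ ⟨_, ⟨n, rfl⟩, rfl⟩
        exact ⟨n, (hf n).symm⟩
      exact h1 (Submodule.mem_map_of_mem hv)
    exact map_mem_closure f.continuous hu hmap
  have hSP : ∀ u, Q (S (P u)) = S (P u) := fun u =>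
    hQid _ (key (S : U →L[𝕜] U) x y hS _ (hPmem u))
  have hSQ : ∀ u, P (S.symm (Q u)) = S.symm (Q u) := fun u =>
    hPid _ (key (S.symm : U →L[𝕜] U) y x hS' _ (hQmem u))
  -- ys n (Q f) = ys n f
  have he : ∀ n f, ys n (Q f) = ys n f := by
    intro n f
    have h1 : Tendsto (fun m => ys n (∑ k ∈ Finset.range m, ys k f • y k)) atTop
        (𝓝 (ys n (Q f))) := ((ys n).continuous.tendsto _).comp (hQt f)
    have h3 : Tendsto (fun m => ys n (∑ k ∈ Finset.range m, ys k f • y k)) atTop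
        (𝓝 (ys n f)) := by
      refine Tendsto.congr' ?_ tendsto_const_nhds
      filter_upwards [eventually_gt_atTop n] with m hm
      rw [map_sum]
      simp only [map_smul, hyo, smul_eq_mul, mul_ite, mul_one, mul_zero]
      simp [Finset.sum_ite_eq, Finset.mem_range.mpr hm]
    exact tendsto_nhds_unique h1 h3
  -- ys n (S (P u)) = xs n u
  have hf : ∀ n u, ys n (S (P u)) = xs n u := by
    intro n u
    have h1 : Tendsto (fun m => ys n (S (∑ k ∈ Finset.range m, xs k u • x k))) atTop
        (𝓝 (ys n (S (P u)))) :=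
      (((ys n).continuous.comp S.continuous).tendsto _).comp (hPt u)
    have h3 : Tendsto (fun m => ys n (S (∑ k ∈ Finset.range m, xs k u • x k))) atTop
        (𝓝 (xs n u)) := by
      refine Tendsto.congr' ?_ tendsto_const_nhds
      filter_upwards [eventually_gt_atTop n] with m hm
      rw [map_sum, map_sum]
      simp only [map_smul, hS, hyo, smul_eq_mul, mul_ite, mul_one, mul_zero]
      simp [Finset.sum_ite_eq, Finset.mem_range.mpr hm]
    exact tendsto_nhds_unique h1 h3
  -- define T and its inverse
  set Tm : U →L[𝕜] U := (S : U →L[𝕜] U) - Q.comp (S : U →L[𝕜] U)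
      + ((S : U →L[𝕜] U)).comp P with hTm
  set Tm' : U →L[𝕜] U := (S.symm : U →L[𝕜] U) - P.comp (S.symm : U →L[𝕜] U)
      + ((S.symm : U →L[𝕜] U)).comp Q with hTm'
  have hTmu : ∀ u, Tm u = S u - Q (S u) + S (P u) := fun u => by
    simp [hTm, ContinuousLinearMap.sub_apply, ContinuousLinearMap.add_apply]
  have hTmu' : ∀ u, Tm' u = S.symm u - P (S.symm u) + S.symm (Q u) := fun u => by
    simp [hTm', ContinuousLinearMap.sub_apply, ContinuousLinearMap.add_apply]
  have hleft : ∀ u, Tm' (Tm u) = u := by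
    intro u
    rw [hTmu, hTmu']
    simp only [map_add, map_sub, hSP, hSQ, S.symm_apply_apply, S.apply_symm_apply, hPi, hQi]
    abel
  have hright : ∀ u, Tm (Tm' u) = u := by
    intro u
    rw [hTmu', hTmu]
    simp only [map_add, map_sub, hSP, hSQ, S.symm_apply_apply, S.apply_symm_apply, hPi, hQi]
    abel
  refine ⟨ContinuousLinearEquiv.equivOfInverse Tm Tm' hleft hright, ?_, ?_⟩
  · intro n
    rw [ContinuousLinearEquiv.equivOfInverse_apply, hTmu, hPx, hS, hQy]
    abel
  · intro n u
    rw [ContinuousLinearEquiv.equivOfInverse_apply, hTmu]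
    rw [map_add, map_sub, he, hf]
    ring
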